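/- arXiv:2404.09224 — 2 statements merged into one kernel-verified Lean document; each statement's English description precedes it below -/
import Mathlib

section
/- Let A be a semiprime unital ring and a ∈ A with len(A/Aa) < ∞ and len(Ran(a)) < ∞. Then len(Ran(a)) ≤ len(A/Aa), with equality if and only if the image of a in A/soc(A) is left invertible. -/
open MulOpposite Submodule

/-- The length of a module: the supremum of lengths of chains of submodules. -/
noncomputable def mlen (R M : Type*) [Ring R] [AddCommGroup M] [Module R M] : ℕ∞ :=
  WithBot.unbotD 0 (Order.krullDim (Submodule R M))

/-- A ring is semiprime if it has no nonzero nilpotent (two-sided) ideals;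
equivalently, `a A a = 0` implies `a = 0`. -/
def IsSemiprimeRing (A : Type*) [Ring A] : Prop :=
  ∀ a : A, (∀ x : A, a * x * a = 0) → a = 0

/-- The (left) socle of a ring: the sum of all minimal left ideals. -/
noncomputable def socle (A : Type*) [Ring A] : Submodule A A :=
  sSup {m : Submodule A A | IsAtom m}

/-- An element is Fredholm if its image in `A/soc(A)` is invertible. -/
def IsFredholmElem {A : Type*} [Ring A] (a : A) : Prop :=
  ∃ b : A, a * b - 1 ∈ socle A ∧ b * a - 1 ∈ socle A

/-- A left ideal is Fredholm if it contains a Fredholm element. -/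
def IsFredholmLeftIdeal {A : Type*} [Ring A] (L : Submodule A A) : Prop :=
  ∃ a ∈ L, IsFredholmElem a

/-- The right annihilator of a set, as a right ideal (`Aᵐᵒᵖ`-submodule of `A`). -/
def rAnn {A : Type*} [Ring A] (S : Set A) : Submodule Aᵐᵒᵖ A where
  carrier := {a | ∀ s ∈ S, s * a = 0}
  add_mem' := by intro x y hx hy s hs; rw [Set.mem_setOf_eq] at *; rw [mul_add, hx s hs, hy s hs, add_zero]
  zero_mem' := by intro s _; exact mul_zero s
  smul_mem' := by
    intro c x hx s hs
    show s * (c • x) = 0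
    rw [MulOpposite.smul_eq_mul_unop, ← mul_assoc, hx s hs, zero_mul]

/-- The left annihilator of a set, as a left ideal. -/
def lAnn {A : Type*} [Ring A] (S : Set A) : Submodule A A where
  carrier := {a | ∀ s ∈ S, a * s = 0}
  add_mem' := by intro x y hx hy s hs; rw [Set.mem_setOf_eq] at *; rw [add_mul, hx s hs, hy s hs, add_zero]
  zero_mem' := by intro s _; exact zero_mul s
  smul_mem' := by
    intro c x hx s hs
    show c * x * s = 0
    rw [mul_assoc, hx s hs, mul_zero]


section Aux
variable {A : Type*} [Ring A]

/-- Right ideal generated by an element. -/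
abbrev Rspan (x : A) : Submodule Aᵐᵒᵖ A := Submodule.span Aᵐᵒᵖ {x}
/-- Left ideal generated by an element. -/
abbrev Lspan (x : A) : Submodule A A := Submodule.span A {x}

lemma mem_Rspan {x y : A} : y ∈ Rspan x ↔ ∃ c : A, x * c = y := by
  rw [Submodule.mem_span_singleton]
  constructor
  · rintro ⟨r, rfl⟩; exact ⟨r.unop, (MulOpposite.smul_eq_mul_unop _ _).symm⟩
  · rintro ⟨c, rfl⟩; exact ⟨op c, by simp [MulOpposite.smul_eq_mul_unop]⟩

lemma mem_Lspan {x y : A} : y ∈ Lspan x ↔ ∃ c : A, c * x = y := by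
  rw [Submodule.mem_span_singleton]; simp_rw [smul_eq_mul]

lemma self_mem_Rspan (x : A) : x ∈ Rspan x := Submodule.mem_span_singleton_self x
lemma self_mem_Lspan (x : A) : x ∈ Lspan x := Submodule.mem_span_singleton_self x

lemma Rspan_le {x : A} {N : Submodule Aᵐᵒᵖ A} : Rspan x ≤ N ↔ x ∈ N :=
  Submodule.span_singleton_le_iff_mem x N
lemma Lspan_le {x : A} {N : Submodule A A} : Lspan x ≤ N ↔ x ∈ N :=
  Submodule.span_singleton_le_iff_mem x N

lemma mul_mem_right {x c : A} {N : Submodule Aᵐᵒᵖ A} (h : x ∈ N) : x * c ∈ N := by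
  simpa [MulOpposite.smul_eq_mul_unop] using N.smul_mem (op c) h

lemma mul_mem_left {x c : A} {N : Submodule A A} (h : x ∈ N) : c * x ∈ N := by
  simpa [smul_eq_mul] using N.smul_mem c h

lemma idem_mul_of_mem_Rspan {e x : A} (he : e * e = e) (hx : x ∈ Rspan e) : e * x = x := by
  obtain ⟨c, rfl⟩ := mem_Rspan.1 hx; rw [← mul_assoc, he]

lemma mul_idem_of_mem_Lspan {e x : A} (he : e * e = e) (hx : x ∈ Lspan e) : x * e = x := by
  obtain ⟨c, rfl⟩ := mem_Lspan.1 hx; rw [mul_assoc, he]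

/-- Left multiplication as a right-module endomorphism. -/
def lmulOp (c : A) : A →ₗ[Aᵐᵒᵖ] A where
  toFun x := c * x
  map_add' := mul_add c
  map_smul' r x := by simp [MulOpposite.smul_eq_mul_unop, mul_assoc]

@[simp] lemma lmulOp_apply (c x : A) : lmulOp c x = c * x := rfl

/-- Right multiplication as a left-module endomorphism. -/
def rmulA (c : A) : A →ₗ[A] A where
  toFun x := x * c
  map_add' x y := add_mul x y c
  map_smul' r x := by simp [smul_eq_mul, mul_assoc]

@[simp] lemma rmulA_apply (c x : A) : rmulA c x = x * c := rfl

end Aux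

section Brauer
variable {A : Type*} [Ring A]

lemma brauer_right (hA : IsSemiprimeRing A) {N : Submodule Aᵐᵒᵖ A} (hN : IsAtom N) :
    ∃ e : A, e * e = e ∧ e ≠ 0 ∧ N = Rspan e := by
  obtain ⟨n, hn, hn0⟩ : ∃ n ∈ N, n ≠ 0 := by
    by_contra h; push_neg at h
    exact hN.1 (eq_bot_iff.2 fun x hx => by
      rcases eq_or_ne x 0 with rfl | hx0
      · exact zero_mem _
      · exact absurd hx0 (not_not.2 (h x hx)))
  obtain ⟨c, hc⟩ : ∃ c, n * c * n ≠ 0 := by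
    by_contra h; push_neg at h; exact hn0 (hA n h)
  set m := n * c with hm
  have hmN : m ∈ N := mul_mem_right hn
  have hmy : m * n ≠ 0 := hc
  have hm0 : m ≠ 0 := fun h => hmy (by rw [h, zero_mul])
  have hDN : rAnn {m} ⊓ N = ⊥ := by
    refine hN.2 _ (lt_of_le_of_ne inf_le_right fun h => ?_)
    have hnr : n ∈ rAnn ({m} : Set A) := (h.symm ▸ hn : n ∈ rAnn {m} ⊓ N).1
    exact hmy (hnr m rfl)
  have hmaple : N.map (lmulOp m) ≤ N := by
    rintro _ ⟨x, hx, rfl⟩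
    exact mul_mem_right hmN
  have hmapne : N.map (lmulOp m) ≠ ⊥ := by
    intro h
    apply hmy
    have : m * n ∈ N.map (lmulOp m) := ⟨n, hn, rfl⟩
    rwa [h, Submodule.mem_bot] at this
  have hmap : N.map (lmulOp m) = N := by
    rcases lt_or_eq_of_le hmaple with h | h
    · exact absurd (hN.2 _ h) hmapne
    · exact h
  obtain ⟨e, heN, hme⟩ : ∃ e ∈ N, m * e = m := by
    have : m ∈ N.map (lmulOp m) := hmap.symm ▸ hmN
    obtain ⟨e, he, hme⟩ := this
    exact ⟨e, he, hme⟩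
  have hee : e * e = e := by
    have h1 : e * e - e ∈ rAnn ({m} : Set A) ⊓ N := by
      refine ⟨?_, sub_mem (mul_mem_right heN) heN⟩
      rintro s rfl
      rw [mul_sub, ← mul_assoc, hme, hme, sub_self]
    rw [hDN, Submodule.mem_bot, sub_eq_zero] at h1
    exact h1
  have he0 : e ≠ 0 := fun h => hm0 (by rw [← hme, h, mul_zero])
  refine ⟨e, hee, he0, ?_⟩
  have hle : Rspan e ≤ N := Rspan_le.2 heN
  rcases lt_or_eq_of_le hle with h | h
  · exact absurd (hN.2 _ h) (fun hb => he0 (by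
      have := self_mem_Rspan e
      rwa [hb, Submodule.mem_bot] at this))
  · exact h.symm

lemma brauer_left (hA : IsSemiprimeRing A) {N : Submodule A A} (hN : IsAtom N) :
    ∃ e : A, e * e = e ∧ e ≠ 0 ∧ N = Lspan e := by
  obtain ⟨n, hn, hn0⟩ : ∃ n ∈ N, n ≠ 0 := by
    by_contra h; push_neg at h
    exact hN.1 (eq_bot_iff.2 fun x hx => by
      rcases eq_or_ne x 0 with rfl | hx0
      · exact zero_mem _
      · exact absurd hx0 (not_not.2 (h x hx)))
  obtain ⟨c, hc⟩ : ∃ c, n * c * n ≠ 0 := by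
    by_contra h; push_neg at h; exact hn0 (hA n h)
  set m := c * n with hm
  have hmN : m ∈ N := mul_mem_left hn
  have hmy : n * m ≠ 0 := by rwa [hm, ← mul_assoc]
  have hm0 : m ≠ 0 := fun h => hmy (by rw [h, mul_zero])
  have hDN : lAnn {m} ⊓ N = ⊥ := by
    refine hN.2 _ (lt_of_le_of_ne inf_le_right fun h => ?_)
    have hnr : n ∈ lAnn ({m} : Set A) := (h.symm ▸ hn : n ∈ lAnn {m} ⊓ N).1
    exact hmy (hnr m rfl)
  have hmaple : N.map (rmulA m) ≤ N := by
    rintro _ ⟨x, hx, rfl⟩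
    exact mul_mem_left hmN
  have hmapne : N.map (rmulA m) ≠ ⊥ := by
    intro h
    apply hmy
    have : n * m ∈ N.map (rmulA m) := ⟨n, hn, rfl⟩
    rwa [h, Submodule.mem_bot] at this
  have hmap : N.map (rmulA m) = N := by
    rcases lt_or_eq_of_le hmaple with h | h
    · exact absurd (hN.2 _ h) hmapne
    · exact h
  obtain ⟨e, heN, hme⟩ : ∃ e ∈ N, e * m = m := by
    have : m ∈ N.map (rmulA m) := hmap.symm ▸ hmN
    obtain ⟨e, he, hme⟩ := this
    exact ⟨e, he, hme⟩
  have hee : e * e = e := by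
    have h1 : e * e - e ∈ lAnn ({m} : Set A) ⊓ N := by
      refine ⟨?_, sub_mem (mul_mem_left heN) heN⟩
      rintro s rfl
      rw [sub_mul, mul_assoc, hme, hme, sub_self]
    rw [hDN, Submodule.mem_bot, sub_eq_zero] at h1
    exact h1
  have he0 : e ≠ 0 := fun h => hm0 (by rw [← hme, h, zero_mul])
  refine ⟨e, hee, he0, ?_⟩
  have hle : Lspan e ≤ N := Lspan_le.2 heN
  rcases lt_or_eq_of_le hle with h | h
  · exact absurd (hN.2 _ h) (fun hb => he0 (by
      have := self_mem_Lspan e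
      rwa [hb, Submodule.mem_bot] at this))
  · exact h.symm

end Brauer

section Division
variable {A : Type*} [Ring A]

lemma exists_right_inv {e : A} (hN : IsAtom (Rspan e)) (he : e * e = e)
    {q : A} (hq : e * q * e = q) (hq0 : q ≠ 0) :
    ∃ w : A, e * w * e = w ∧ q * w = e := by
  have hqe : q * e = q := by rw [← hq, mul_assoc, mul_assoc, he, ← mul_assoc]
  have heq : e * q = q := by rw [← hq, ← mul_assoc, ← mul_assoc, he]
  have hqmem : q ∈ Rspan e := mem_Rspan.2 ⟨q * e, by rw [← mul_assoc, heq, hqe]⟩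
  have hle : Rspan q ≤ Rspan e := Rspan_le.2 hqmem
  have hspan : Rspan q = Rspan e := by
    rcases lt_or_eq_of_le hle with h | h
    · exact absurd (hN.2 _ h) (fun hb => hq0 (by
        have := self_mem_Rspan q
        rwa [hb, Submodule.mem_bot] at this))
    · exact h
  obtain ⟨v, hv⟩ : ∃ v, q * v = e := mem_Rspan.1 (hspan ▸ self_mem_Rspan e)
  refine ⟨e * v * e, ?_, ?_⟩
  · rw [← mul_assoc, ← mul_assoc, he, mul_assoc, mul_assoc, he, ← mul_assoc]
  · rw [← mul_assoc, ← mul_assoc, hqe, hv, he]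

lemma exists_left_inv {e : A} (hN : IsAtom (Rspan e)) (he : e * e = e) (he0 : e ≠ 0)
    {q : A} (hq : e * q * e = q) (hq0 : q ≠ 0) :
    ∃ w : A, q * w = e ∧ w * q = e := by
  obtain ⟨w, hw, hqw⟩ := exists_right_inv hN he hq hq0
  have hw0 : w ≠ 0 := fun h => he0 (by rw [← hqw, h, mul_zero])
  obtain ⟨w', hw', hww'⟩ := exists_right_inv hN he hw hw0
  have hwe : w * e = w := by rw [← hw, mul_assoc, mul_assoc, he, ← mul_assoc]
  have hqe : q * e = q := by rw [← hq, mul_assoc, mul_assoc, he, ← mul_assoc]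
  have hwq : w * q = e := by
    have h1 : w * q * (w * w') = w * w' := by
      rw [← mul_assoc, mul_assoc w q w, hqw, hwe]
    rwa [hww', mul_assoc, hqe] at h1
  exact ⟨w, hqw, hwq⟩

end Division

section Socle
variable {A : Type*} [Ring A]

lemma atom_Lspan_of_atom_Rspan (hA : IsSemiprimeRing A) {e : A} (he : e * e = e) (he0 : e ≠ 0)
    (hN : IsAtom (Rspan e)) : IsAtom (Lspan e) := by
  constructor
  · intro h
    exact he0 (by have := self_mem_Lspan e; rwa [h, Submodule.mem_bot] at this)
  · intro L hL
    by_contra h0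
    obtain ⟨x, hxL, hx0⟩ : ∃ x ∈ L, x ≠ 0 := by
      by_contra h; push_neg at h
      exact h0 (eq_bot_iff.2 fun x hx => by
        rcases eq_or_ne x 0 with rfl | hx0
        · exact zero_mem _
        · exact absurd hx0 (not_not.2 (h x hx)))
    have hxe : x * e = x := mul_idem_of_mem_Lspan he (hL.le hxL)
    obtain ⟨c, hc⟩ : ∃ c, x * c * x ≠ 0 := by
      by_contra h; push_neg at h; exact hx0 (hA x h)
    set q := e * (c * x) * e with hqdef
    have hq : e * q * e = q := by
      rw [hqdef, ← mul_assoc, ← mul_assoc, he, mul_assoc (e * (c*x)) e e, he]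
    have hxq : x * q = x * c * x := by
      rw [hqdef, ← mul_assoc, ← mul_assoc, hxe, ← mul_assoc, mul_assoc (x*c) x e, hxe]
    have hq0 : q ≠ 0 := fun h => hc (by rw [← hxq, h, mul_zero])
    obtain ⟨w, -, hwq⟩ := exists_left_inv hN he he0 hq hq0
    have hq' : q = e * (c * x) := by
      rw [hqdef, mul_assoc e (c * x) e, mul_assoc c x e, hxe]
    have hmem : e ∈ L := by
      have h2 : (w * e * c) * x = e := by
        rw [mul_assoc (w * e) c x, mul_assoc w e (c * x), ← hq', hwq]
      exact h2 ▸ mul_mem_left hxL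
    exact hL.not_ge (Lspan_le.2 hmem)

end Socle

section SocleTwoSided
variable {A : Type*} [Ring A]

lemma map_atom_le_socle {m : Submodule A A} (hm : IsAtom m) (x : A) :
    m.map (rmulA x) ≤ socle A := by
  rcases eq_or_ne (m.map (rmulA x)) ⊥ with h | h
  · exact h ▸ bot_le
  · refine le_sSup ?_
    refine ⟨h, fun B hB => ?_⟩
    have hC : (B.comap (rmulA x)) ⊓ m < m := by
      refine lt_of_le_of_ne inf_le_right fun hC => ?_
      have hle : m ≤ B.comap (rmulA x) := by
        rw [← hC]; exact inf_le_left
      exact hB.ne (le_antisymm hB.le (Submodule.map_le_iff_le_comap.2 hle))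
    have hbot := hm.2 _ hC
    rw [eq_bot_iff]
    rintro b hbB
    obtain ⟨y, hy, rfl⟩ := hB.le hbB
    have : y ∈ (B.comap (rmulA x)) ⊓ m := ⟨hbB, hy⟩
    rw [hbot, Submodule.mem_bot] at this
    simp [this]

lemma socle_mul_mem {s : A} (hs : s ∈ socle A) (x : A) : s * x ∈ socle A := by
  have hmap : (socle A).map (rmulA x) ≤ socle A := by
    conv_lhs => rw [socle, sSup_eq_iSup', Submodule.map_iSup]
    exact iSup_le fun m => map_atom_le_socle m.2 x
  exact hmap ⟨s, hs, rfl⟩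

lemma Rspan_subset_socle {e : A} (he : e ∈ socle A) :
    (Rspan e : Set A) ⊆ (socle A : Set A) := by
  intro y hy
  obtain ⟨c, rfl⟩ := mem_Rspan.1 hy
  exact socle_mul_mem he c

end SocleTwoSided

section ArtinianAux
variable {R M : Type*} [Ring R] [AddCommGroup M] [Module R M]

lemma isArtinian_of_krullDim_ne_top (h : Order.krullDim (Submodule R M) ≠ ⊤) :
    IsArtinian R M := by
  rw [isArtinian_iff]
  by_contra hw
  obtain ⟨f⟩ := not_isEmpty_iff.1 fun hemp =>
    hw ((RelEmbedding.wellFounded_iff_isEmpty).2 hemp)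
  have : InfiniteDimensionalOrder (Submodule R M) := by
    constructor
    intro n
    refine ⟨LTSeries.mk n (fun i => f (n - i)) ?_, rfl⟩
    intro i j hij
    have hj : (j : ℕ) ≤ n := Nat.lt_succ_iff.1 j.2
    exact f.map_rel_iff.2 (by omega)
  exact h (Order.krullDim_eq_top)

lemma isArtinian_of_subsingleton' [Subsingleton M] : IsArtinian R M := by
  rw [isArtinian_iff]
  constructor
  intro a
  constructor
  intro b hb
  exact absurd (Subsingleton.elim (α := Submodule R M) b a ▸ hb) (lt_irrefl a)

end ArtinianAux

section ArtinianSocle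
variable {A : Type*} [Ring A]

lemma isArtinian_of_isAtom {m : Submodule A A} (hm : IsAtom m) : IsArtinian A ↥m := by
  have : IsSimpleModule A ↥m := isSimpleModule_iff_isAtom.2 hm
  rw [isArtinian_iff]
  constructor
  intro a
  constructor
  intro b hb
  constructor
  intro c hc
  rcases eq_bot_or_eq_top (α := Submodule A ↥m) b with rfl | rfl
  · exact absurd hc (not_lt_bot)
  · exact absurd hb (not_top_lt)

lemma isArtinian_Lspan_of_mem_socle {x : A} (hx : x ∈ socle A) :
    IsArtinian A ↥(Lspan x) := by
  have hc := Submodule.singleton_span_isCompactElement (R := A) x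
  have hle : Lspan x ≤ sSup {m : Submodule A A | IsAtom m} := Lspan_le.2 hx
  obtain ⟨t, hts, htle⟩ := (CompleteLattice.isCompactElement_iff_exists_le_sSup_of_le_sSup _ _).1 hc _ hle
  suffices h : IsArtinian A ↥(t.sup id) from isArtinian_of_le htle
  clear htle hle hc hx
  classical
  induction t using Finset.induction_on with
  | empty => rw [Finset.sup_empty]; exact isArtinian_of_subsingleton'
  | @insert a s ha ih =>
      rw [Finset.sup_insert]
      have h1 : IsArtinian A ↥(id a) := isArtinian_of_isAtom (hts (Finset.mem_insert_self a s))
      have h2 : IsArtinian A ↥(s.sup id) := ih (fun y hy => hts (Finset.mem_insert_of_mem hy))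
      exact isArtinian_sup _ _

end ArtinianSocle

section IdemGen
variable {A : Type*} [Ring A]

lemma exists_idem_gen_right (hA : IsSemiprimeRing A) (R₀ : Submodule Aᵐᵒᵖ A)
    (hart : IsArtinian Aᵐᵒᵖ ↥R₀) {N : Submodule Aᵐᵒᵖ A} (hNle : N ≤ R₀) :
    ∃ g : A, g * g = g ∧ N = Rspan g ∧ (N : Set A) ⊆ (socle A : Set A) := by
  have wf : WellFounded ((· < ·) : Submodule Aᵐᵒᵖ ↥R₀ → Submodule Aᵐᵒᵖ ↥R₀ → Prop) :=
    (isArtinian_iff _ _).1 hart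
  suffices h : ∀ K : Submodule Aᵐᵒᵖ ↥R₀, ∃ g, g * g = g ∧ K.map R₀.subtype = Rspan g ∧
      ((K.map R₀.subtype : Submodule Aᵐᵒᵖ A) : Set A) ⊆ (socle A : Set A) by
    obtain ⟨g, h1, h2, h3⟩ := h (N.comap R₀.subtype)
    rw [Submodule.map_comap_subtype, inf_eq_right.2 hNle] at h2 h3
    exact ⟨g, h1, h2, h3⟩
  intro K
  induction K using WellFounded.induction wf with
  | _ K IH => ?_
  by_cases hbot : K.map R₀.subtype = ⊥
  · refine ⟨0, by simp, ?_, ?_⟩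
    · rw [hbot]; exact (Submodule.span_zero_singleton _).symm
    · rw [hbot]; intro x hx; rw [Submodule.bot_coe, Set.mem_singleton_iff] at hx
      rw [hx]; exact zero_mem _
  · have hKne : K ≠ ⊥ := fun h => hbot (by rw [h, Submodule.map_bot])
    obtain ⟨K₀, ⟨hK₀ne, hK₀le⟩, hmin⟩ :=
      wf.has_min {K' | K' ≠ ⊥ ∧ K' ≤ K} ⟨K, hKne, le_rfl⟩
    set N₁ := K.map R₀.subtype with hN₁def
    set M₀ := K₀.map R₀.subtype with hM₀def
    have hN₁R₀ : N₁ ≤ R₀ := Submodule.map_subtype_le _ _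
    have hM₀le : M₀ ≤ N₁ := Submodule.map_mono hK₀le
    have hM₀ne : M₀ ≠ ⊥ := by
      intro h
      apply hK₀ne
      rw [eq_bot_iff]
      intro x hx
      have hx2 : (↑x : A) ∈ M₀ := Submodule.mem_map_of_mem hx
      rw [h, Submodule.mem_bot] at hx2
      have : x = 0 := Subtype.ext hx2
      rw [this]; exact zero_mem _
    have hM₀atom : IsAtom M₀ := by
      refine ⟨hM₀ne, fun B hB => ?_⟩
      have hBle : B ≤ R₀ := hB.le.trans (hM₀le.trans hN₁R₀)
      have h1 : B.comap R₀.subtype ≤ K₀ := by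
        intro x hx
        have hx2 : (↑x : A) ∈ B := hx
        obtain ⟨y, hy, hyx⟩ := hB.le hx2
        have : y = x := Subtype.ext_iff.2 hyx
        exact this ▸ hy
      have h2 : B.comap R₀.subtype ≠ K₀ := by
        intro h
        apply hB.ne
        have : M₀ = B := by
          rw [hM₀def, ← h, Submodule.map_comap_subtype, inf_eq_right.2 hBle]
        exact this.symm
      have h3 := hmin (B.comap R₀.subtype)
      have h4 : B.comap R₀.subtype = ⊥ := by
        by_contra h5
        exact h3 ⟨h5, h1.trans hK₀le⟩ (lt_of_le_of_ne h1 h2)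
      rw [eq_bot_iff]
      intro b hb
      have hbR : b ∈ R₀ := hBle hb
      have : (⟨b, hbR⟩ : ↥R₀) ∈ B.comap R₀.subtype := hb
      rw [h4, Submodule.mem_bot] at this
      have : b = 0 := congrArg Subtype.val this
      rw [this]; exact zero_mem _
    obtain ⟨e₁, he₁, he₁0, hM₀⟩ := brauer_right hA hM₀atom
    have he₁soc : e₁ ∈ socle A := by
      have hat : Lspan e₁ ∈ {m : Submodule A A | IsAtom m} :=
        atom_Lspan_of_atom_Rspan hA he₁ he₁0 (hM₀ ▸ hM₀atom)
      have hle2 : Lspan e₁ ≤ socle A := le_sSup hat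
      exact hle2 (self_mem_Lspan e₁)
    set N' := N₁.map (lmulOp (1 - e₁)) with hN'def
    have hann : ∀ x ∈ N', e₁ * x = 0 := by
      rintro _ ⟨y, hy, rfl⟩
      rw [lmulOp_apply, ← mul_assoc, mul_sub, mul_one, he₁, sub_self, zero_mul]
    have hN'le : N' ≤ N₁ := by
      rintro _ ⟨y, hy, rfl⟩
      rw [lmulOp_apply, sub_mul, one_mul]
      exact sub_mem hy (hM₀le (hM₀ ▸ mem_Rspan.2 ⟨y, rfl⟩))
    have he₁N₁ : e₁ ∈ N₁ := hM₀le (hM₀ ▸ self_mem_Rspan e₁)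
    have hN'lt : N' < N₁ := by
      refine lt_of_le_of_ne hN'le fun h => he₁0 ?_
      have : e₁ * e₁ = 0 := hann e₁ (h.symm ▸ he₁N₁)
      rwa [he₁] at this
    have hN'R₀ : N' ≤ R₀ := hN'le.trans hN₁R₀
    set K' := N'.comap R₀.subtype with hK'def
    have hK'map : K'.map R₀.subtype = N' := by
      rw [hK'def, Submodule.map_comap_subtype, inf_eq_right.2 hN'R₀]
    have hK'lt : K' < K := by
      refine lt_of_le_of_ne ?_ fun h => hN'lt.ne ?_
      · intro x hx
        have hx2 : (↑x : A) ∈ N₁ := hN'le hx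
        obtain ⟨y, hy, hyx⟩ := hx2
        have : y = x := Subtype.ext hyx
        exact this ▸ hy
      · rw [← hK'map, h, ← hN₁def]
    obtain ⟨g', hg'idem, hg'span, hg'soc⟩ := IH K' hK'lt
    rw [hK'map] at hg'span hg'soc
    have he₁g' : e₁ * g' = 0 := hann g' (hg'span ▸ self_mem_Rspan g')
    set g := e₁ + g' - g' * e₁ with hgdef
    have h1 : e₁ * (g' * e₁) = 0 := by rw [← mul_assoc, he₁g', zero_mul]
    have hgidem : g * g = g := by
      have expand : g * g = e₁*e₁ + e₁*g' - e₁*(g'*e₁) + (g'*e₁ + g'*g' - g'*(g'*e₁))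
          - (g'*e₁*e₁ + g'*e₁*g' - g'*e₁*(g'*e₁)) := by rw [hgdef]; noncomm_ring
      rw [expand, he₁, he₁g', h1, hg'idem, ← mul_assoc g' g' e₁, hg'idem,
        mul_assoc g' e₁ e₁, he₁, mul_assoc g' e₁ g', he₁g', mul_zero,
        mul_assoc g' e₁ (g'*e₁), h1, mul_zero, hgdef]
      abel
    have hge₁ : g * e₁ = e₁ := by
      have expand : g * e₁ = e₁*e₁ + g'*e₁ - g'*(e₁*e₁) := by rw [hgdef]; noncomm_ring
      rw [expand, he₁]; abel
    have hgg' : g * g' = g' := by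
      have expand : g * g' = e₁*g' + g'*g' - g'*(e₁*g') := by rw [hgdef]; noncomm_ring
      rw [expand, he₁g', hg'idem, mul_zero]; abel
    have hsub : N₁ = M₀ ⊔ N' := by
      refine le_antisymm ?_ (sup_le hM₀le hN'le)
      intro x hx
      have hxeq : x = e₁ * x + (1 - e₁) * x := by noncomm_ring
      rw [hxeq]
      exact add_mem (le_sup_left (α := Submodule Aᵐᵒᵖ A)
          (hM₀ ▸ mem_Rspan.2 ⟨x, rfl⟩ : (e₁ * x) ∈ M₀))
        (le_sup_right (α := Submodule Aᵐᵒᵖ A) (⟨x, hx, rfl⟩ : (1 - e₁) * x ∈ N'))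
    refine ⟨g, hgidem, ?_, ?_⟩
    · refine le_antisymm ?_ (Rspan_le.2 ?_)
      · rw [hsub]
        refine sup_le ?_ ?_
        · rw [hM₀]; exact Rspan_le.2 (mem_Rspan.2 ⟨e₁, hge₁⟩)
        · rw [hg'span]; exact Rspan_le.2 (mem_Rspan.2 ⟨g', hgg'⟩)
      · rw [hgdef]
        exact sub_mem (add_mem he₁N₁ (hN'le (hg'span ▸ self_mem_Rspan g')))
          (mul_mem_right (hN'le (hg'span ▸ self_mem_Rspan g')))
    · rw [hsub]
      intro x hx
      obtain ⟨y, hy, z, hz, rfl⟩ := Submodule.mem_sup.1 hx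
      exact add_mem (Rspan_subset_socle he₁soc (hM₀ ▸ hy)) (hg'soc hz)

end IdemGen

section IdemGenLeft
variable {A : Type*} [Ring A]

lemma exists_idem_gen_left (hA : IsSemiprimeRing A) (L₀ : Submodule A A)
    (hart : IsArtinian A ↥L₀) {N : Submodule A A} (hNle : N ≤ L₀) :
    ∃ g : A, g * g = g ∧ N = Lspan g := by
  have wf : WellFounded ((· < ·) : Submodule A ↥L₀ → Submodule A ↥L₀ → Prop) :=
    (isArtinian_iff _ _).1 hart
  suffices h : ∀ K : Submodule A ↥L₀, ∃ g, g * g = g ∧ K.map L₀.subtype = Lspan g by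
    obtain ⟨g, h1, h2⟩ := h (N.comap L₀.subtype)
    rw [Submodule.map_comap_subtype, inf_eq_right.2 hNle] at h2
    exact ⟨g, h1, h2⟩
  intro K
  induction K using WellFounded.induction wf with
  | _ K IH => ?_
  by_cases hbot : K.map L₀.subtype = ⊥
  · exact ⟨0, by simp, by rw [hbot]; exact (Submodule.span_zero_singleton _).symm⟩
  · have hKne : K ≠ ⊥ := fun h => hbot (by rw [h, Submodule.map_bot])
    obtain ⟨K₀, ⟨hK₀ne, hK₀le⟩, hmin⟩ :=
      wf.has_min {K' | K' ≠ ⊥ ∧ K' ≤ K} ⟨K, hKne, le_rfl⟩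
    set N₁ := K.map L₀.subtype with hN₁def
    set M₀ := K₀.map L₀.subtype with hM₀def
    have hN₁L₀ : N₁ ≤ L₀ := Submodule.map_subtype_le _ _
    have hM₀le : M₀ ≤ N₁ := Submodule.map_mono hK₀le
    have hM₀ne : M₀ ≠ ⊥ := by
      intro h
      apply hK₀ne
      rw [eq_bot_iff]
      intro x hx
      have hx2 : (↑x : A) ∈ M₀ := Submodule.mem_map_of_mem hx
      rw [h, Submodule.mem_bot] at hx2
      have : x = 0 := Subtype.ext hx2
      rw [this]; exact zero_mem _
    have hM₀atom : IsAtom M₀ := by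
      refine ⟨hM₀ne, fun B hB => ?_⟩
      have hBle : B ≤ L₀ := hB.le.trans (hM₀le.trans hN₁L₀)
      have h1 : B.comap L₀.subtype ≤ K₀ := by
        intro x hx
        have hx2 : (↑x : A) ∈ B := hx
        obtain ⟨y, hy, hyx⟩ := hB.le hx2
        have : y = x := Subtype.ext hyx
        exact this ▸ hy
      have h2 : B.comap L₀.subtype ≠ K₀ := by
        intro h
        apply hB.ne
        have : M₀ = B := by
          rw [hM₀def, ← h, Submodule.map_comap_subtype, inf_eq_right.2 hBle]
        exact this.symm
      have h4 : B.comap L₀.subtype = ⊥ := by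
        by_contra h5
        exact hmin (B.comap L₀.subtype) ⟨h5, h1.trans hK₀le⟩ (lt_of_le_of_ne h1 h2)
      rw [eq_bot_iff]
      intro b hb
      have hbR : b ∈ L₀ := hBle hb
      have hmem : (⟨b, hbR⟩ : ↥L₀) ∈ B.comap L₀.subtype := hb
      rw [h4, Submodule.mem_bot] at hmem
      have : b = 0 := congrArg Subtype.val hmem
      rw [this]; exact zero_mem _
    obtain ⟨e₁, he₁, he₁0, hM₀⟩ := brauer_left hA hM₀atom
    set N' := N₁.map (rmulA (1 - e₁)) with hN'def
    have hann : ∀ x ∈ N', x * e₁ = 0 := by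
      rintro _ ⟨y, hy, rfl⟩
      rw [rmulA_apply, mul_assoc, sub_mul, one_mul, he₁, sub_self, mul_zero]
    have hN'le : N' ≤ N₁ := by
      rintro _ ⟨y, hy, rfl⟩
      rw [rmulA_apply, mul_sub, mul_one]
      exact sub_mem hy (hM₀le (hM₀ ▸ mem_Lspan.2 ⟨y, rfl⟩))
    have he₁N₁ : e₁ ∈ N₁ := hM₀le (hM₀ ▸ self_mem_Lspan e₁)
    have hN'lt : N' < N₁ := by
      refine lt_of_le_of_ne hN'le fun h => he₁0 ?_
      have : e₁ * e₁ = 0 := hann e₁ (h.symm ▸ he₁N₁)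
      rwa [he₁] at this
    have hN'L₀ : N' ≤ L₀ := hN'le.trans hN₁L₀
    set K' := N'.comap L₀.subtype with hK'def
    have hK'map : K'.map L₀.subtype = N' := by
      rw [hK'def, Submodule.map_comap_subtype, inf_eq_right.2 hN'L₀]
    have hK'lt : K' < K := by
      refine lt_of_le_of_ne ?_ fun h => hN'lt.ne ?_
      · intro x hx
        have hx2 : (↑x : A) ∈ N₁ := hN'le hx
        obtain ⟨y, hy, hyx⟩ := hx2
        have : y = x := Subtype.ext hyx
        exact this ▸ hy
      · rw [← hK'map, h, ← hN₁def]
    obtain ⟨g', hg'idem, hg'span⟩ := IH K' hK'lt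
    rw [hK'map] at hg'span
    have hg'e₁ : g' * e₁ = 0 := hann g' (hg'span ▸ self_mem_Lspan g')
    set g := e₁ + g' - e₁ * g' with hgdef
    have h1 : (e₁ * g') * e₁ = 0 := by rw [mul_assoc, hg'e₁, mul_zero]
    have hgidem : g * g = g := by
      have expand : g * g = e₁*e₁ + e₁*g' - e₁*(e₁*g') + (g'*e₁ + g'*g' - g'*(e₁*g'))
          - (e₁*g'*e₁ + e₁*g'*g' - e₁*g'*(e₁*g')) := by rw [hgdef]; noncomm_ring
      rw [expand, ← mul_assoc e₁ e₁ g', ← mul_assoc g' e₁ g', ← mul_assoc (e₁*g') e₁ g',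
        h1, hg'e₁, zero_mul, he₁, mul_assoc e₁ g' g', hg'idem, hgdef]
      abel
    have he₁g : e₁ * g = e₁ := by
      have expand : e₁ * g = e₁*e₁ + e₁*g' - e₁*(e₁*g') := by rw [hgdef]; noncomm_ring
      rw [expand, ← mul_assoc e₁ e₁ g', he₁]; abel
    have hg'g : g' * g = g' := by
      have expand : g' * g = g'*e₁ + g'*g' - g'*(e₁*g') := by rw [hgdef]; noncomm_ring
      rw [expand, ← mul_assoc g' e₁ g', hg'e₁, zero_mul, hg'idem]; abel
    have hsub : N₁ = M₀ ⊔ N' := by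
      refine le_antisymm ?_ (sup_le hM₀le hN'le)
      intro x hx
      have hxeq : x = x * e₁ + x * (1 - e₁) := by noncomm_ring
      rw [hxeq]
      exact add_mem (le_sup_left (α := Submodule A A)
          (hM₀ ▸ mem_Lspan.2 ⟨x, rfl⟩ : (x * e₁) ∈ M₀))
        (le_sup_right (α := Submodule A A) (⟨x, hx, rfl⟩ : x * (1 - e₁) ∈ N'))
    refine ⟨g, hgidem, le_antisymm ?_ (Lspan_le.2 ?_)⟩
    · rw [hsub]
      refine sup_le ?_ ?_
      · rw [hM₀]; exact Lspan_le.2 (mem_Lspan.2 ⟨e₁, he₁g⟩)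
      · rw [hg'span]; exact Lspan_le.2 (mem_Lspan.2 ⟨g', hg'g⟩)
    · rw [hgdef]
      exact sub_mem (add_mem he₁N₁ (hN'le (hg'span ▸ self_mem_Lspan g')))
        (mul_mem_left (hN'le (hg'span ▸ self_mem_Lspan g')))

end IdemGenLeft

section Annihilators
variable {A : Type*} [Ring A]

lemma one_sub_idem {g : A} (hg : g * g = g) : (1 - g) * (1 - g) = 1 - g := by
  have expand : (1 - g) * (1 - g) = 1 - g - g + g * g := by noncomm_ring
  rw [expand, hg]; abel

lemma lAnn_Rspan_idem {g : A} (hg : g * g = g) :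
    lAnn ((Rspan g : Submodule Aᵐᵒᵖ A) : Set A) = Lspan (1 - g) := by
  ext y
  constructor
  · intro h
    have hyg : y * g = 0 := h g (self_mem_Rspan g)
    exact mem_Lspan.2 ⟨y, by rw [mul_sub, mul_one, hyg, sub_zero]⟩
  · intro hy
    obtain ⟨c, rfl⟩ := mem_Lspan.1 hy
    intro s hs
    obtain ⟨d, rfl⟩ := mem_Rspan.1 hs
    rw [mul_assoc c (1-g) (g*d), ← mul_assoc (1-g) g d, sub_mul, one_mul, hg,
      sub_self, zero_mul, mul_zero]

lemma rAnn_Lspan_idem {g : A} (hg : g * g = g) :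
    rAnn ((Lspan g : Submodule A A) : Set A) = Rspan (1 - g) := by
  ext y
  constructor
  · intro h
    have hyg : g * y = 0 := h g (self_mem_Lspan g)
    exact mem_Rspan.2 ⟨y, by rw [sub_mul, one_mul, hyg, sub_zero]⟩
  · intro hy
    obtain ⟨c, rfl⟩ := mem_Rspan.1 hy
    intro s hs
    obtain ⟨d, rfl⟩ := mem_Lspan.1 hs
    rw [mul_assoc d g ((1-g)*c), ← mul_assoc g (1-g) c, mul_sub, mul_one, hg,
      sub_self, zero_mul, mul_zero]

lemma rAnn_lAnn_eq (hA : IsSemiprimeRing A) {e : A}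
    (hart : IsArtinian Aᵐᵒᵖ ↥(Rspan e))
    {N : Submodule Aᵐᵒᵖ A} (hN : N ≤ Rspan e) :
    rAnn ((lAnn (N : Set A) : Submodule A A) : Set A) = N := by
  obtain ⟨g, hg, rfl, -⟩ := exists_idem_gen_right hA _ hart hN
  rw [lAnn_Rspan_idem hg, rAnn_Lspan_idem (one_sub_idem hg), sub_sub_cancel]

lemma lAnn_rAnn_eq (hA : IsSemiprimeRing A) {e : A} (he : e * e = e)
    (hesoc : e ∈ socle A)
    {L : Submodule A A} (hL : Lspan (1 - e) ≤ L) :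
    lAnn ((rAnn (L : Set A) : Submodule Aᵐᵒᵖ A) : Set A) = L := by
  have hsupe : Lspan (1 - e) ⊔ Lspan e = ⊤ := by
    rw [eq_top_iff]
    intro x _
    have hx : x = x * (1 - e) + x * e := by noncomm_ring
    rw [hx]
    exact add_mem (le_sup_left (α := Submodule A A) (mem_Lspan.2 ⟨x, rfl⟩))
      (le_sup_right (α := Submodule A A) (mem_Lspan.2 ⟨x, rfl⟩))
  have hdecomp : L = Lspan (1 - e) ⊔ (Lspan e ⊓ L) := by
    have hmod := sup_inf_assoc_of_le (Lspan e) hL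
    rw [hsupe, top_inf_eq] at hmod
    exact hmod
  have hartAe : IsArtinian A ↥(Lspan e) := isArtinian_Lspan_of_mem_socle hesoc
  obtain ⟨k₀, hk₀, hKeq⟩ := exists_idem_gen_left hA (Lspan e) hartAe
    (inf_le_left : Lspan e ⊓ L ≤ Lspan e)
  have hk₀mem : k₀ ∈ Lspan e ⊓ L := hKeq ▸ self_mem_Lspan k₀
  have hk₀e : k₀ * e = k₀ := mul_idem_of_mem_Lspan he hk₀mem.1
  set k := e * k₀ with hkdef
  have hkk : k * k = k := by
    rw [hkdef, mul_assoc e k₀ (e*k₀), ← mul_assoc k₀ e k₀, hk₀e, hk₀]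
  have hek : e * k = k := by rw [hkdef, ← mul_assoc, he]
  have hke : k * e = k := by rw [hkdef, mul_assoc, hk₀e]
  have hkspan : Lspan k = Lspan e ⊓ L := by
    rw [hKeq]
    refine le_antisymm (Lspan_le.2 ?_) (Lspan_le.2 ?_)
    · exact mem_Lspan.2 ⟨e, rfl⟩
    · exact mem_Lspan.2 ⟨k₀, by rw [hkdef, ← mul_assoc, hk₀e, hk₀]⟩
  set h := (1 - e) + k with hhdef
  have huk : (1 - e) * k = 0 := by rw [sub_mul, one_mul, hek, sub_self]
  have hku : k * (1 - e) = 0 := by rw [mul_sub, mul_one, hke, sub_self]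
  have hhh : h * h = h := by
    have expand : ((1-e)+k)*((1-e)+k) = (1-e)*(1-e) + (1-e)*k + (k*(1-e) + k*k) := by
      noncomm_ring
    rw [hhdef, expand, one_sub_idem he, huk, hku, hkk]; abel
  have hLh : L = Lspan h := by
    refine le_antisymm ?_ (Lspan_le.2 ?_)
    · rw [hdecomp]
      refine sup_le (Lspan_le.2 ?_) ?_
      · exact mem_Lspan.2 ⟨1-e, by rw [hhdef, mul_add, one_sub_idem he, huk, add_zero]⟩
      · rw [← hkspan]
        exact Lspan_le.2 (mem_Lspan.2 ⟨k, by rw [hhdef, mul_add, hku, hkk, zero_add]⟩)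
    · have hkL : k ∈ L := (hkspan ▸ self_mem_Lspan k : k ∈ Lspan e ⊓ L).2
      rw [hhdef]
      exact add_mem (hL (self_mem_Lspan _)) hkL
  rw [hLh, rAnn_Lspan_idem hhh, lAnn_Rspan_idem (one_sub_idem hhh), sub_sub_cancel]

end Annihilators

section AnnIso
variable {A : Type*} [Ring A]

lemma lAnn_anti {S T : Set A} (h : S ⊆ T) : lAnn T ≤ lAnn S :=
  fun _ hy s hs => hy s (h hs)

lemma rAnn_anti {S T : Set A} (h : S ⊆ T) : rAnn T ≤ rAnn S :=
  fun _ hy s hs => hy s (h hs)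

lemma exists_annIso (hA : IsSemiprimeRing A) {e : A} (he : e * e = e)
    (hart : IsArtinian Aᵐᵒᵖ ↥(Rspan e)) (hesoc : e ∈ socle A) :
    Nonempty ({N : Submodule Aᵐᵒᵖ A // N ≤ Rspan e} ≃o
      ({L : Submodule A A // Lspan (1 - e) ≤ L})ᵒᵈ) := by
  have toF : ∀ N : {N : Submodule Aᵐᵒᵖ A // N ≤ Rspan e},
      Lspan (1 - e) ≤ lAnn ((N.1 : Submodule Aᵐᵒᵖ A) : Set A) := by
    intro N
    refine Lspan_le.2 ?_
    intro t ht
    have hse : e * t = t := idem_mul_of_mem_Rspan he (N.2 ht)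
    rw [sub_mul, one_mul, hse, sub_self]
  have invF : ∀ L : {L : Submodule A A // Lspan (1 - e) ≤ L},
      rAnn ((L.1 : Submodule A A) : Set A) ≤ Rspan e := by
    intro L x hx
    have h1 : (1 - e) * x = 0 := hx (1 - e) (L.2 (self_mem_Lspan _))
    rw [sub_mul, one_mul, sub_eq_zero] at h1
    exact mem_Rspan.2 ⟨x, h1.symm⟩
  refine ⟨⟨⟨fun N => OrderDual.toDual ⟨lAnn ((N.1 : Submodule Aᵐᵒᵖ A) : Set A), toF N⟩,
    fun L => ⟨rAnn (((OrderDual.ofDual L).1 : Submodule A A) : Set A), invF _⟩,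
    fun N => Subtype.ext (rAnn_lAnn_eq hA hart N.2),
    fun L => Subtype.ext (lAnn_rAnn_eq hA he hesoc (OrderDual.ofDual L).2)⟩, ?_⟩⟩
  intro N N'
  constructor
  · intro h
    have h2 : lAnn ((N'.1 : Submodule Aᵐᵒᵖ A) : Set A) ≤ lAnn ((N.1 : Submodule Aᵐᵒᵖ A) : Set A) := h
    have h3 := rAnn_anti (show ((lAnn ((N'.1 : Submodule Aᵐᵒᵖ A) : Set A) : Submodule A A) : Set A)
        ⊆ ((lAnn ((N.1 : Submodule Aᵐᵒᵖ A) : Set A) : Submodule A A) : Set A) from h2)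
    rw [rAnn_lAnn_eq hA hart N.2, rAnn_lAnn_eq hA hart N'.2] at h3
    exact h3
  · intro h
    exact lAnn_anti (show ((N.1 : Submodule Aᵐᵒᵖ A) : Set A) ⊆ ((N'.1 : Submodule Aᵐᵒᵖ A) : Set A) from h)

end AnnIso

section WithBotAux

lemma unbot'_mono {x y : WithBot ℕ∞} (h : x ≤ y) : WithBot.unbotD 0 x ≤ WithBot.unbotD 0 y := by
  cases x with
  | bot => simp
  | coe a =>
    cases y with
    | bot => exact absurd h (by simp)
    | coe b => simpa using WithBot.coe_le_coe.1 h

lemma unbot'_inj {x y : WithBot ℕ∞} (hx : x ≠ ⊥) (hy : y ≠ ⊥)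
    (h : WithBot.unbotD 0 x = WithBot.unbotD 0 y) : x = y := by
  cases x with
  | bot => exact absurd rfl hx
  | coe a =>
    cases y with
    | bot => exact absurd rfl hy
    | coe b => simpa using h

lemma krullDim_ne_bot {α : Type*} [Preorder α] [Nonempty α] : Order.krullDim α ≠ ⊥ := by
  intro h
  have h0 := Order.krullDim_nonneg (α := α)
  rw [h, le_bot_iff] at h0
  simp at h0

end WithBotAux

theorem stmt16 (A : Type*) [Ring A] (hA : IsSemiprimeRing A) (a : A)
    (h1 : mlen A (A ⧸ Submodule.span A {a}) ≠ ⊤)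
    (h2 : mlen Aᵐᵒᵖ (rAnn ({a} : Set A)) ≠ ⊤) :
    mlen Aᵐᵒᵖ (rAnn ({a} : Set A)) ≤ mlen A (A ⧸ Submodule.span A {a}) ∧
      (mlen Aᵐᵒᵖ (rAnn ({a} : Set A)) = mlen A (A ⧸ Submodule.span A {a}) ↔
        ∃ b : A, b * a - 1 ∈ socle A) := by
  classical
  set S : Submodule A A := Submodule.span A {a} with hSdef
  have hk2 : Order.krullDim (Submodule Aᵐᵒᵖ ↥(rAnn ({a} : Set A))) ≠ ⊤ := by
    intro h
    apply h2
    simp only [mlen, h]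
    rfl
  have hart : IsArtinian Aᵐᵒᵖ ↥(rAnn ({a} : Set A)) := isArtinian_of_krullDim_ne_top hk2
  obtain ⟨e, he, hRe, hRsoc⟩ := exists_idem_gen_right hA (rAnn ({a} : Set A)) hart le_rfl
  have heR : e ∈ rAnn ({a} : Set A) := by rw [hRe]; exact self_mem_Rspan e
  have hesoc : e ∈ socle A := hRsoc heR
  have hae : a * e = 0 := heR a rfl
  have hartE : IsArtinian Aᵐᵒᵖ ↥(Rspan e) := hRe ▸ hart
  have hSE : S ≤ Lspan (1 - e) :=
    Lspan_le.2 (mem_Lspan.2 ⟨a, by rw [mul_sub, mul_one, hae, sub_zero]⟩)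
  obtain ⟨iso3⟩ := exists_annIso hA he hartE hesoc
  have hd1 : Order.krullDim (Submodule Aᵐᵒᵖ ↥(rAnn ({a} : Set A)))
      = Order.krullDim {L : Submodule A A // Lspan (1 - e) ≤ L} := by
    calc Order.krullDim (Submodule Aᵐᵒᵖ ↥(rAnn ({a} : Set A)))
        = Order.krullDim {N : Submodule Aᵐᵒᵖ A // N ≤ rAnn ({a} : Set A)} :=
          Order.krullDim_eq_of_orderIso (Submodule.MapSubtype.orderIso _)
      _ = Order.krullDim {N : Submodule Aᵐᵒᵖ A // N ≤ Rspan e} := by rw [hRe]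
      _ = Order.krullDim (({L : Submodule A A // Lspan (1 - e) ≤ L})ᵒᵈ) :=
          Order.krullDim_eq_of_orderIso iso3
      _ = _ := Order.krullDim_orderDual
  have hd2 : Order.krullDim (Submodule A (A ⧸ S))
      = Order.krullDim {L : Submodule A A // S ≤ L} :=
    Order.krullDim_eq_of_orderIso (Submodule.comapMkQRelIso S)
  have hmono : StrictMono (fun (L : {L : Submodule A A // Lspan (1 - e) ≤ L}) =>
      (⟨L.1, hSE.trans L.2⟩ : {L : Submodule A A // S ≤ L})) := by
    intro x y hxy
    exact Subtype.mk_lt_mk.2 (Subtype.coe_lt_coe.2 hxy)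
  have hle : Order.krullDim {L : Submodule A A // Lspan (1 - e) ≤ L}
      ≤ Order.krullDim {L : Submodule A A // S ≤ L} :=
    Order.krullDim_le_of_strictMono _ hmono
  have hlekrull : Order.krullDim (Submodule Aᵐᵒᵖ ↥(rAnn ({a} : Set A)))
      ≤ Order.krullDim (Submodule A (A ⧸ S)) := by rw [hd1, hd2]; exact hle
  refine ⟨unbot'_mono hlekrull, ?_, ?_⟩
  · -- equality → Fredholm
    intro hEq
    simp only [mlen] at hEq
    have hdXY := unbot'_inj krullDim_ne_bot krullDim_ne_bot hEq
    have hSeq : S = Lspan (1 - e) := by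
      by_contra hne
      have hlt : S < Lspan (1 - e) := lt_of_le_of_ne hSE hne
      have hdS_eq : Order.krullDim {L : Submodule A A // S ≤ L}
          = Order.krullDim {L : Submodule A A // Lspan (1 - e) ≤ L} := by
        rw [← hd1, ← hd2, hdXY]
      haveI nE : Nonempty {L : Submodule A A // Lspan (1 - e) ≤ L} := ⟨⟨⊤, le_top⟩⟩
      haveI nS : Nonempty {L : Submodule A A // S ≤ L} := ⟨⟨⊤, le_top⟩⟩
      have hdEtop : Order.krullDim {L : Submodule A A // Lspan (1 - e) ≤ L} ≠ ⊤ := by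
        rw [← hd1]; exact hk2
      have hdE2 : Order.krullDim {L : Submodule A A // Lspan (1 - e) ≤ L}
          = ((⨆ (p : LTSeries {L : Submodule A A // Lspan (1 - e) ≤ L}),
            (p.length : ℕ∞) : ℕ∞) : WithBot ℕ∞) := Order.krullDim_eq_iSup_length
      set m : ℕ∞ := ⨆ (p : LTSeries {L : Submodule A A // Lspan (1 - e) ≤ L}),
        (p.length : ℕ∞) with hmdef
      have hmne : m ≠ ⊤ := by
        intro h
        apply hdEtop
        have h2 : ((m : ℕ∞) : WithBot ℕ∞) = ((⊤ : ℕ∞) : WithBot ℕ∞) := congrArg _ h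
        rw [hdE2, h2]
        rfl
      haveI : Nonempty (LTSeries {L : Submodule A A // Lspan (1 - e) ≤ L}) :=
        ⟨RelSeries.singleton _ ⟨⊤, le_top⟩⟩
      have hattain : m ∈ Set.range
          (fun p : LTSeries {L : Submodule A A // Lspan (1 - e) ≤ L} => (p.length : ℕ∞)) := by
        have hlttop : sSup (Set.range
            (fun p : LTSeries {L : Submodule A A // Lspan (1 - e) ≤ L} => (p.length : ℕ∞))) < ⊤ := by
          have : sSup (Set.range
              (fun p : LTSeries {L : Submodule A A // Lspan (1 - e) ≤ L} => (p.length : ℕ∞))) = m := rfl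
          rw [this]
          exact lt_top_iff_ne_top.2 hmne
        haveI : Nonempty ↥(Set.range
            (fun p : LTSeries {L : Submodule A A // Lspan (1 - e) ≤ L} => (p.length : ℕ∞))) :=
          ⟨⟨_, Set.mem_range_self (Classical.arbitrary _)⟩⟩
        exact ENat.sSup_mem_of_nonempty_of_lt_top hlttop
      obtain ⟨p, hp0⟩ := hattain
      have hp : (p.length : ℕ∞) = m := hp0
      have hheadlt : (⟨S, le_rfl⟩ : {L : Submodule A A // S ≤ L})
          < (p.map _ hmono).head := by
        rw [LTSeries.head_map]
        exact Subtype.mk_lt_mk.2 (lt_of_lt_of_le hlt p.head.2)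
      set q := (p.map _ hmono).cons ⟨S, le_rfl⟩ hheadlt with hqdef
      have hqlen : q.length = p.length + 1 := by
        rw [hqdef, RelSeries.cons_length, LTSeries.map_length]
      have hq := Order.LTSeries.length_le_krullDim q
      rw [hdS_eq, hdE2] at hq
      rw [hqlen] at hq
      have hle2 : ((p.length + 1 : ℕ) : ℕ∞) ≤ m := by exact_mod_cast hq
      rw [← hp] at hle2
      have : p.length + 1 ≤ p.length := by exact_mod_cast hle2
      omega
    have h1e : 1 - e ∈ S := by rw [hSeq]; exact self_mem_Lspan _
    obtain ⟨b, hb⟩ := mem_Lspan.1 h1e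
    refine ⟨b, ?_⟩
    rw [hb]
    have : (1 : A) - e - 1 = -e := by abel
    rw [this]
    exact neg_mem hesoc
  · -- Fredholm → equality
    rintro ⟨b, hb⟩
    have hSeq : S = Lspan (1 - e) := by
      refine le_antisymm hSE (Lspan_le.2 ?_)
      -- `1 - e ∈ S`
      set s : A := b * a - 1 with hsdef
      have hssoc : s ∈ socle A := hb
      have hGart : IsArtinian A ↥(Lspan s) := isArtinian_Lspan_of_mem_socle hssoc
      obtain ⟨g, hg, hGg⟩ := exists_idem_gen_left hA (Lspan s) hGart le_rfl
      obtain ⟨k₀, hk₀, hKeq⟩ := exists_idem_gen_left hA (Lspan s) hGart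
        (inf_le_right : S ⊓ Lspan s ≤ Lspan s)
      have hk₀mem : k₀ ∈ S ⊓ Lspan s := hKeq ▸ self_mem_Lspan k₀
      have hk₀g : k₀ * g = k₀ := mul_idem_of_mem_Lspan hg (hGg ▸ hk₀mem.2)
      set k : A := g * k₀ with hkdef
      have hkk : k * k = k := by
        rw [hkdef, mul_assoc g k₀ (g * k₀), ← mul_assoc k₀ g k₀, hk₀g, hk₀]
      have hgk : g * k = k := by rw [hkdef, ← mul_assoc, hg]
      have hkg : k * g = k := by rw [hkdef, mul_assoc, hk₀g]
      have hkspan : Lspan k = S ⊓ Lspan s := by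
        rw [hKeq]
        exact le_antisymm (Lspan_le.2 (mem_Lspan.2 ⟨g, rfl⟩))
          (Lspan_le.2 (mem_Lspan.2 ⟨k₀, by rw [hkdef, ← mul_assoc, hk₀g, hk₀]⟩))
      set C : Submodule A A := Lspan (g - k) with hCdef
      have hkG : k ∈ Lspan s := (hkspan ▸ self_mem_Lspan k : k ∈ S ⊓ Lspan s).2
      have hgkG : g - k ∈ Lspan s := sub_mem (hGg ▸ self_mem_Lspan g) hkG
      have hCle : C ≤ Lspan s := Lspan_le.2 hgkG
      have hGdec : Lspan s ≤ Lspan k ⊔ C := by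
        intro x hx
        have hxg : x * g = x := mul_idem_of_mem_Lspan hg (hGg ▸ hx)
        have h5 : x * k + x * (g - k) = x := by
          have h6 : x * k + x * (g - k) = x * g := by noncomm_ring
          rw [h6, hxg]
        rw [← h5]
        exact add_mem (le_sup_left (α := Submodule A A) (mem_Lspan.2 ⟨x, rfl⟩))
          (le_sup_right (α := Submodule A A) (mem_Lspan.2 ⟨x, rfl⟩))
      have hdisj : S ⊓ C = ⊥ := by
        rw [eq_bot_iff]
        rintro x ⟨hxS, hxC⟩
        have hxmem : x ∈ S ⊓ Lspan s := ⟨hxS, hCle hxC⟩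
        have hxk : x * k = x := mul_idem_of_mem_Lspan hkk (hkspan.symm ▸ hxmem)
        obtain ⟨d, hd⟩ := mem_Lspan.1 hxC
        have hzero : x * k = 0 := by
          rw [← hd, mul_assoc, sub_mul, hgk, hkk, sub_self, mul_zero]
        rw [Submodule.mem_bot, ← hxk, hzero]
      have hsup : S ⊔ C = ⊤ := by
        rw [eq_top_iff]
        intro x _
        have h1mem : (1 : A) ∈ S ⊔ C := by
          have hba : b * a ∈ S := mem_Lspan.2 ⟨b, rfl⟩
          have hsmem : s ∈ S ⊔ C := by
            have h7 : s ∈ Lspan k ⊔ C := hGdec (self_mem_Lspan s)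
            refine (sup_le_sup (show Lspan k ≤ S from ?_) le_rfl) h7
            rw [hkspan]
            exact inf_le_left
          have h8 : (1 : A) = b * a - s := by rw [hsdef]; abel
          rw [h8]
          exact sub_mem (le_sup_left (α := Submodule A A) hba) hsmem
        have hx1 : x = x * 1 := (mul_one x).symm
        rw [hx1]
        exact mul_mem_left h1mem
      have hcompl : IsCompl C S :=
        ⟨by rw [disjoint_iff, inf_comm]; exact hdisj,
         by rw [codisjoint_iff, sup_comm]; exact hsup⟩
      set π := C.projectionOnto S hcompl with hπdef
      set f : A := (π 1 : A) with hfdef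
      have hπ : ∀ x : A, (π x : A) = x * f := by
        intro x
        have h9 : π x = x • π 1 := by rw [← map_smul, smul_eq_mul, mul_one]
        rw [h9, hfdef, Submodule.coe_smul, smul_eq_mul]
      have hker : ∀ x ∈ S, x * f = 0 := by
        intro x hx
        have h10 := Submodule.projectionOnto_apply_of_mem_right hcompl hx
        rw [← hπ x, h10, Submodule.coe_zero]
      have hproj : ∀ x : A, x - x * f ∈ S := by
        intro x
        have hxmem : x ∈ S ⊔ C := by rw [hsup]; exact Submodule.mem_top
        obtain ⟨u, huS, v, hvC, huv⟩ := Submodule.mem_sup.1 hxmem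
        have h6 : π x = π u + π v := by rw [← map_add, huv]
        have h7 : π u = 0 := Submodule.projectionOnto_apply_of_mem_right hcompl huS
        have h8 : π v = ⟨v, hvC⟩ := Submodule.projectionOnto_apply_left hcompl ⟨v, hvC⟩
        have h11 : x * f = v := by
          rw [← hπ x, h6, h7, h8, zero_add]
        rw [h11, ← huv]
        have h12 : u + v - v = u := by abel
        rw [h12]
        exact huS
      have h1f : 1 - f ∈ S := by
        have h13 := hproj 1
        rwa [one_mul] at h13
      have haf : a * f = 0 := hker a (self_mem_Lspan a)
      have hfR : f ∈ Rspan e := by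
        rw [← hRe]
        intro t ht
        rw [Set.mem_singleton_iff] at ht
        rw [ht]
        exact haf
      have hef : e * f = f := idem_mul_of_mem_Rspan he hfR
      have h10 : (1 - e) * (1 - f) = 1 - e := by
        have expand : (1 - e) * (1 - f) = 1 - f - e + e * f := by noncomm_ring
        rw [expand, hef]
        abel
      rw [← h10]
      exact mul_mem_left h1f
    simp only [mlen]
    rw [hd1, hd2, hSeq]
end

section
/- Let A be a unital C*-algebra and L ⊆ A a finitely generated left ideal such that the left A-module A/L is Noetherian. Then every left ideal I with L ⊆ I ⊆ A is generated by an idempotent; in particular L = A(1-p) for an idempotent p ∈ soc(A), i.e., L is a Fredholm left ideal and A/L is semisimple. -/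
open MulOpposite Submodule

set_option maxHeartbeats 1000000

lemma span_eq_of_close {A : Type*} [CStarAlgebra A] (I : Submodule A A) (p x : A)
    (hp : IsIdempotentElem p) (hpn : ‖p‖ ≤ 1) (hI : I ≤ span A {p}) (hx : x ∈ I)
    (hclose : ‖x - p‖ < 1) : I = span A {p} := by
  have hxp : x * p = x := by
    obtain ⟨a, ha⟩ := mem_span_singleton.mp (hI hx)
    rw [smul_eq_mul] at ha
    rw [← ha, mul_assoc, hp]
  set z : A := p - p * x * p with hz
  have hzn : ‖z‖ < 1 := by
    have : z = p * (p - x) * p := by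
      rw [mul_sub, sub_mul, hp, hp]
    calc ‖z‖ = ‖p * (p - x) * p‖ := by rw [this]
      _ ≤ ‖p * (p - x)‖ * ‖p‖ := norm_mul_le _ _
      _ ≤ ‖p‖ * ‖p - x‖ * ‖p‖ := by gcongr; exact norm_mul_le _ _
      _ ≤ 1 * ‖p - x‖ * 1 := by gcongr
      _ = ‖x - p‖ := by rw [one_mul, mul_one, norm_sub_rev]
      _ < 1 := hclose
  set u : Aˣ := Units.oneSub z hzn with hu
  have hup : (u : A) * p = p * x := by
    have : (u : A) = 1 - z := rfl
    have h1 : p * x * p * p = p * x := by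
      rw [mul_assoc (p * x) p p, hp, mul_assoc p x p, hxp]
    rw [this, hz, sub_mul, one_mul, sub_mul, h1, hp, sub_sub_cancel]
  have hpI : p ∈ I := by
    have : p = ((u⁻¹ : Aˣ) : A) * p * x := by
      rw [mul_assoc, ← hup, ← mul_assoc, u.inv_mul, one_mul]
    rw [this]
    exact I.smul_mem _ hx
  refine le_antisymm hI ?_
  rw [span_le, Set.singleton_subset_iff]
  exact hpI



private lemma real_aux1 (ε s t : ℝ) (hs0 : 0 ≤ s) (hs1 : s ≤ 1) (ht0 : 0 ≤ t)
    (ht2 : t ≤ 2 * ε) : s * t * s ≤ 2 * ε := by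
  nlinarith [mul_nonneg (mul_nonneg hs0 ht0) hs0, mul_nonneg hs0 ht0,
    mul_nonneg (mul_nonneg hs0 ht0) (by linarith : (0:ℝ) ≤ 1 - s),
    mul_nonneg (by linarith : (0:ℝ) ≤ 1 - s) ht0]

private lemma real_aux2 (B y : ℝ) (hB0 : 0 ≤ B) (hy : 1 ≤ y)
    (hle : y * (B + 1) ≤ B * y) : False := by nlinarith

lemma cstar_fg_closed {A : Type*} [CStarAlgebra A] (J : Submodule A A) (hFG : J.FG)
    (hcl : IsClosed (J : Set A)) :
    ∃ p : A, IsIdempotentElem p ∧ ‖p‖ ≤ 1 ∧ J = span A {p} := by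
  letI := CStarAlgebra.spectralOrder A
  haveI := CStarAlgebra.spectralOrderedRing A
  obtain ⟨S, hS⟩ := hFG
  set n := S.card with hn
  set x : Fin n → A := fun i => ((S.equivFin.symm i : {a // a ∈ S}) : A) with hx
  have hxS : ∀ i, x i ∈ (S : Set A) := fun i => (S.equivFin.symm i).2
  have hrange : Set.range x = (S : Set A) := by
    ext a
    constructor
    · rintro ⟨i, rfl⟩; exact hxS i
    · intro ha; exact ⟨S.equivFin ⟨a, ha⟩, by simp [hx]⟩
  have hspan : span A (Set.range x) = J := by rw [hrange]; exact hS
  have hxJ : ∀ i, x i ∈ J := by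
    intro i
    rw [← hspan]
    exact subset_span ⟨i, rfl⟩
  set h : A := ∑ i, star (x i) * x i with hh
  have hh0 : (0 : A) ≤ h := Finset.sum_nonneg fun i _ => star_mul_self_nonneg (x i)
  have hhsa : IsSelfAdjoint h := .of_nonneg hh0
  have hle : ∀ i, star (x i) * x i ≤ h := fun i =>
    Finset.single_le_sum (f := fun i => star (x i) * x i)
      (fun j _ => star_mul_self_nonneg (x j)) (Finset.mem_univ i)
  have hsp : ∀ t ∈ spectrum ℝ h, (0:ℝ) ≤ t := fun t ht => spectrum_nonneg_of_nonneg hh0 ht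
  have hhJ : h ∈ J := Submodule.sum_mem _ fun i _ => J.smul_mem (star (x i)) (hxJ i)
  have hspanh : (span A {h} : Submodule A A) ≤ J := by
    rw [span_le, Set.singleton_subset_iff]; exact hhJ
  -- C2: basic norm estimate
  have normsq : ∀ (v d : A), star v * v ≤ h → ‖v * d‖ ^ 2 ≤ ‖star d * h * d‖ := by
    intro v d hv
    have h1 : ‖v * d‖ ^ 2 = ‖star (v * d) * (v * d)‖ := by
      rw [CStarRing.norm_star_mul_self]; ring
    have h2 : star (v * d) * (v * d) = star d * (star v * v) * d := by
      rw [star_mul]; noncomm_ring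
    rw [h1, h2]
    exact CStarAlgebra.norm_le_norm_of_nonneg_of_le
      (star_left_conjugate_nonneg (star_mul_self_nonneg v) d) (star_left_conjugate_le_conjugate hv d)
  -- Key fact 1 : x i ∈ closure (span {h})
  have key1 : ∀ i, x i ∈ closure ((span A {h} : Submodule A A) : Set A) := by
    intro i
    rw [Metric.mem_closure_iff]
    intro δ hδ
    obtain ⟨m, hm⟩ := exists_nat_one_div_lt (show (0:ℝ) < 4 * δ ^ 2 by positivity)
    set u : ℝ := 1 / (m + 1) with hudef
    have hu : 0 < u := by positivity
    have hu4 : u / 4 < δ ^ 2 := by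
      rw [div_lt_iff₀ (by norm_num : (0:ℝ) < 4)]
      calc u < 4 * δ ^ 2 := hm
        _ ≤ δ ^ 2 * 4 := by linarith
    have hcont1 : ContinuousOn (fun t : ℝ => (u + t)⁻¹) (spectrum ℝ h) := by
      apply ContinuousOn.inv₀ (by fun_prop)
      intro t ht
      have := hsp t ht
      positivity
    set c : A := cfc (fun t : ℝ => t * (u + t)⁻¹) h with hc
    set d : A := cfc (fun t : ℝ => u * (u + t)⁻¹) h with hd
    have hcmem : c ∈ (span A {h} : Submodule A A) := by
      have e0 : c = cfc (fun t : ℝ => (u + t)⁻¹) h * h := by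
        rw [hc]
        have e1 : cfc (fun t : ℝ => t * (u + t)⁻¹) h
            = cfc (fun t : ℝ => (u + t)⁻¹ * t) h := cfc_congr fun t _ => by ring
        rw [e1, cfc_mul _ _ h hcont1 (continuousOn_id' _), cfc_id' ℝ h]
      rw [e0]
      exact mem_span_singleton.mpr ⟨_, rfl⟩
    have hsum : c + d = 1 := by
      rw [hd, hc, ← cfc_add h (fun t : ℝ => t * (u + t)⁻¹) (fun t : ℝ => u * (u + t)⁻¹)
          ((continuousOn_id' _).mul hcont1) (continuousOn_const.mul hcont1),
        ← cfc_one (R := ℝ) (a := h)]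
      apply cfc_congr
      intro t ht
      have ht0 := hsp t ht
      have hut : u + t ≠ 0 := by positivity
      simp only [Pi.one_apply]
      field_simp
      ring
    set w : A := x i * c with hw
    have hwmem : w ∈ (span A {h} : Submodule A A) := by
      obtain ⟨b, hb⟩ := mem_span_singleton.mp hcmem
      refine mem_span_singleton.mpr ⟨x i * b, ?_⟩
      rw [smul_eq_mul] at hb ⊢
      rw [hw, ← hb, mul_assoc]
    refine ⟨w, hwmem, ?_⟩
    have hxd : x i - w = x i * d := by
      have : d = 1 - c := by rw [← hsum, add_sub_cancel_left]
      rw [hw, this, mul_sub, mul_one]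
    have hdsa : IsSelfAdjoint d := hd ▸ cfc_predicate _ h
    have hest : ‖x i * d‖ ^ 2 ≤ u / 4 := by
      refine (normsq (x i) d (hle i)).trans ?_
      have e1 : cfc (fun t : ℝ => (u * (u + t)⁻¹) * t * (u * (u + t)⁻¹)) h
          = d * h * d := by
        rw [cfc_mul (fun t : ℝ => u * (u + t)⁻¹ * t) (fun t : ℝ => u * (u + t)⁻¹) h
            ((continuousOn_const.mul hcont1).mul (continuousOn_id' _))
            (continuousOn_const.mul hcont1),
          cfc_mul (fun t : ℝ => u * (u + t)⁻¹) (fun t : ℝ => t) h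
            (continuousOn_const.mul hcont1) (continuousOn_id' _),
          cfc_id' ℝ h]
      rw [hdsa.star_eq, ← e1]
      apply norm_cfc_le (by positivity)
      intro t ht
      have ht0 := hsp t ht
      have hut : 0 < u + t := by positivity
      rw [Real.norm_eq_abs, abs_of_nonneg (by positivity)]
      have he : u * (u + t)⁻¹ * t * (u * (u + t)⁻¹) = u ^ 2 * t / (u + t) ^ 2 := by
        field_simp
      rw [he, div_le_div_iff₀ (by positivity) (by norm_num : (0:ℝ) < 4)]
      nlinarith [mul_nonneg hu.le (sq_nonneg (u - t))]
    rw [dist_eq_norm, hxd]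
    exact lt_of_pow_lt_pow_left₀ 2 hδ.le (lt_of_le_of_lt hest hu4)
  -- Open mapping theorem: controlled representation
  haveI hJcomplete : CompleteSpace (J.restrictScalars ℂ) := hcl.completeSpace_coe
  have hmemT : ∀ a : Fin n → A, (∑ i, a i * x i) ∈ J.restrictScalars ℂ := fun a =>
    Submodule.sum_mem _ fun i _ => J.smul_mem (a i) (hxJ i)
  set Tlin : (Fin n → A) →ₗ[ℂ] (J.restrictScalars ℂ) :=
    { toFun := fun a => ⟨∑ i, a i * x i, hmemT a⟩
      map_add' := by
        intro a b
        ext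
        simp [add_mul, Finset.sum_add_distrib]
      map_smul' := by
        intro r a
        ext
        simp [Finset.smul_sum, smul_mul_assoc] } with hTlin
  have hTcont : Continuous Tlin := by
    apply Continuous.subtype_mk
    exact continuous_finset_sum _ fun i _ => (continuous_apply i).mul continuous_const
  set T : (Fin n → A) →L[ℂ] (J.restrictScalars ℂ) := ⟨Tlin, hTcont⟩ with hT
  have hTsurj : Function.Surjective T := by
    rintro ⟨y, hy⟩
    have : y ∈ span A (Set.range x) := hspan ▸ hy
    obtain ⟨cc, hcc⟩ := (mem_span_range_iff_exists_fun A).mp this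
    exact ⟨cc, Subtype.ext (by simpa [hT, hTlin, smul_eq_mul] using hcc)⟩
  obtain ⟨C, hC0, hC⟩ := T.exists_preimage_norm_le hTsurj
  obtain ⟨B, hB0, hB⟩ : ∃ B : ℝ, 0 ≤ B ∧ (n : ℝ) * C = B :=
    ⟨n * C, mul_nonneg (Nat.cast_nonneg n) hC0.le, rfl⟩
  have hB1 : 0 < B + 1 := by linarith
  obtain ⟨ε, hε0, hsqrtε⟩ : ∃ ε : ℝ, 0 < ε ∧ Real.sqrt (2 * ε) = 1 / (B + 1) := by
    refine ⟨1 / (2 * (B + 1) ^ 2), div_pos one_pos (mul_pos two_pos (pow_pos hB1 2)), ?_⟩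
    have e2 : 2 * (1 / (2 * (B + 1) ^ 2)) = (1 / (B + 1)) ^ 2 := by
      field_simp
    rw [e2, Real.sqrt_sq (by positivity)]
  -- the spectral gap
  have hgap : ∀ t ∈ spectrum ℝ h, t = 0 ∨ ε ≤ t := by
    by_contra hcon
    push_neg at hcon
    obtain ⟨t₀, ht₀sp, ht₀ne, ht₀lt⟩ := hcon
    have ht₀pos : 0 < t₀ := lt_of_le_of_ne (hsp t₀ ht₀sp) (Ne.symm ht₀ne)
    set δ0 : ℝ := min t₀ (ε - t₀) / 2 with hδ0def
    have hδ0 : 0 < δ0 := div_pos (lt_min ht₀pos (by linarith)) two_pos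
    have hδ0t : δ0 ≤ t₀ / 2 := by
      have := min_le_left t₀ (ε - t₀)
      rw [hδ0def]
      linarith
    set f : ℝ → ℝ := fun t => max 0 (1 - |t - t₀| / δ0) with hf
    have hfc : Continuous f := by fun_prop
    have hf0 : ∀ t, 0 ≤ f t := fun t => le_max_left _ _
    have hf1 : ∀ t, f t ≤ 1 := by
      intro t
      apply max_le (by norm_num)
      have : 0 ≤ |t - t₀| / δ0 := by positivity
      linarith
    have hsupp : ∀ t, f t ≠ 0 → t₀ - δ0 < t ∧ t < t₀ + δ0 := by
      intro t hft
      have h1 : 0 < 1 - |t - t₀| / δ0 := by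
        by_contra hle
        push_neg at hle
        exact hft (max_eq_left hle)
      have h2 : |t - t₀| < δ0 := by
        have := (div_lt_one hδ0).mp (by linarith)
        exact this
      obtain ⟨ha, hb⟩ := abs_lt.mp h2
      constructor <;> linarith
    set gb : ℝ → ℝ := fun t => f t / max t (t₀ / 2) with hgb
    have hmax2 : ∀ t : ℝ, 0 < max t (t₀ / 2) := fun t =>
      lt_max_iff.mpr (Or.inr (by linarith))
    have hgbc : Continuous gb :=
      hfc.div (continuous_id.max continuous_const) fun t => (hmax2 t).ne'
    have hgbid : ∀ t, gb t * t = f t := by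
      intro t
      by_cases hft : f t = 0
      · simp [hgb, hft]
      · obtain ⟨hl, hr⟩ := hsupp t hft
        have htpos : t₀ / 2 < t := by linarith
        rw [hgb]
        simp only []
        rw [max_eq_left htpos.le, div_mul_cancel₀ _ (by linarith : t ≠ 0)]
    set y : A := cfc f h with hy
    have hyJ : y ∈ J.restrictScalars ℂ := by
      have e : y = cfc gb h * h := by
        rw [hy, cfc_congr fun t (_ : t ∈ spectrum ℝ h) => (hgbid t).symm,
          cfc_mul gb (fun t : ℝ => t) h hgbc.continuousOn (continuousOn_id' _), cfc_id' ℝ h]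
      rw [e]
      exact J.smul_mem _ hhJ
    have hy1 : 1 ≤ ‖y‖ := by
      have hft₀ : f t₀ = 1 := by
        rw [hf]; simp
      have := norm_apply_le_norm_cfc f h ht₀sp hfc.continuousOn hhsa
      rw [hft₀, norm_one] at this
      exact this
    have hy0 : 0 < ‖y‖ := by linarith
    set ee : ℝ → ℝ := fun t => min 1 (max 0 (2 - t / ε)) with hee
    have heec : Continuous ee := by fun_prop
    have hee0 : ∀ t, 0 ≤ ee t := fun t => le_min zero_le_one (le_max_left _ _)
    have hee1 : ∀ t, ee t ≤ 1 := fun t => min_le_left _ _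
    set d : A := cfc ee h with hd
    have hfe : ∀ t, f t * ee t = f t := by
      intro t
      by_cases hft : f t = 0
      · simp [hft]
      · obtain ⟨hl, hr⟩ := hsupp t hft
        have hδ0e : δ0 ≤ (ε - t₀) / 2 := by
          have := min_le_right t₀ (ε - t₀)
          rw [hδ0def]
          linarith
        have htε : t < ε := by linarith
        have h2 : 1 ≤ 2 - t / ε := by
          have ht1 : t / ε < 1 := (div_lt_one hε0).mpr htε
          linarith
        have : ee t = 1 := by
          rw [hee]
          simp only []
          rw [max_eq_right (by linarith : (0:ℝ) ≤ 2 - t / ε), min_eq_left h2]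
        rw [this, mul_one]
    have hyd : y * d = y := by
      rw [hy, hd, ← cfc_mul f ee h hfc.continuousOn heec.continuousOn]
      exact cfc_congr fun t _ => hfe t
    obtain ⟨a, hTa, hanorm⟩ := hC ⟨y, hyJ⟩
    have hya : y = ∑ i, a i * x i := (congrArg Subtype.val hTa).symm
    have hnormyJ : ‖(⟨y, hyJ⟩ : J.restrictScalars ℂ)‖ = ‖y‖ := rfl
    rw [hnormyJ] at hanorm
    have hdsa : IsSelfAdjoint d := hd ▸ cfc_predicate _ h
    have hestd : ∀ i, ‖x i * d‖ ≤ Real.sqrt (2 * ε) := by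
      intro i
      rw [Real.le_sqrt (norm_nonneg _) (by linarith)]
      refine (normsq (x i) d (hle i)).trans ?_
      have e1 : cfc (fun t : ℝ => ee t * t * ee t) h = d * h * d := by
        rw [cfc_mul (fun t : ℝ => ee t * t) ee h
            (heec.continuousOn.mul (continuousOn_id' _)) heec.continuousOn,
          cfc_mul ee (fun t : ℝ => t) h heec.continuousOn (continuousOn_id' _),
          cfc_id' ℝ h, hd]
      rw [hdsa.star_eq, ← e1]
      apply norm_cfc_le (by linarith)
      intro t ht
      have ht0 := hsp t ht
      rw [Real.norm_eq_abs, abs_of_nonneg (mul_nonneg (mul_nonneg (hee0 t) ht0) (hee0 t))]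
      by_cases h2ε : t ≤ 2 * ε
      · exact real_aux1 ε (ee t) t (hee0 t) (hee1 t) ht0 h2ε
      · have : ee t = 0 := by
          rw [hee]
          simp only []
          have : 2 - t / ε ≤ 0 := by
            rw [sub_nonpos, le_div_iff₀ hε0]
            linarith
          rw [max_eq_left this, min_eq_right zero_le_one]
        rw [this]
        simp only [zero_mul, mul_zero]
        linarith
    have hfinal : ‖y‖ ≤ B * ‖y‖ / (B + 1) := by
      have e3 : y = ∑ i, a i * (x i * d) := by
        rw [← hyd]
        conv_lhs => rw [hya]
        rw [Finset.sum_mul]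
        exact Finset.sum_congr rfl fun i _ => (mul_assoc _ _ _)
      calc ‖y‖ = ‖∑ i, a i * (x i * d)‖ := by rw [← e3]
        _ ≤ ∑ i, ‖a i * (x i * d)‖ := norm_sum_le _ _
        _ ≤ ∑ i, ‖a i‖ * ‖x i * d‖ := Finset.sum_le_sum fun i _ => norm_mul_le _ _
        _ ≤ ∑ _i : Fin n, (C * ‖y‖) * (1 / (B + 1)) := by
            apply Finset.sum_le_sum
            intro i _
            have h4 : ‖a i‖ ≤ C * ‖y‖ := (norm_le_pi_norm a i).trans hanorm
            have h5 : ‖x i * d‖ ≤ 1 / (B + 1) := hsqrtε ▸ hestd i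
            exact mul_le_mul h4 h5 (norm_nonneg _) (by positivity)
        _ = n * ((C * ‖y‖) * (1 / (B + 1))) := by
            rw [Finset.sum_const, Finset.card_univ, Fintype.card_fin, nsmul_eq_mul]
        _ = B * ‖y‖ / (B + 1) := by rw [← hB]; ring
    rw [le_div_iff₀ hB1] at hfinal
    exact real_aux2 B ‖y‖ hB0 hy1 hfinal
  -- construct the projection
  have hmaxpos : ∀ t : ℝ, 0 < max ε t := fun t => lt_max_iff.mpr (Or.inl hε0)
  set f₀ : ℝ → ℝ := fun t => t / max ε t with hf₀
  have hf₀c : Continuous f₀ :=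
    continuous_id.div (continuous_const.max continuous_id) fun t => (hmaxpos t).ne'
  set p : A := cfc f₀ h with hp
  have hdich : ∀ t ∈ spectrum ℝ h, f₀ t * f₀ t = f₀ t ∧ t * f₀ t = t := by
    intro t ht
    rcases hgap t ht with h0 | hεt
    · subst h0
      constructor <;> simp [hf₀]
    · have hmx : max ε t = t := max_eq_right hεt
      have htpos : (0:ℝ) < t := lt_of_lt_of_le hε0 hεt
      have hft : f₀ t = 1 := by
        rw [hf₀]
        simp only []
        rw [hmx, div_self htpos.ne']
      rw [hft]
      constructor <;> ring
  have hidem : IsIdempotentElem p := by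
    show p * p = p
    rw [hp, ← cfc_mul f₀ f₀ h hf₀c.continuousOn hf₀c.continuousOn]
    exact cfc_congr fun t ht => (hdich t ht).1
  have hpnorm : ‖p‖ ≤ 1 := by
    rw [hp]
    apply norm_cfc_le zero_le_one
    intro t ht
    rw [Real.norm_eq_abs]
    rcases hgap t ht with h0 | hεt
    · subst h0
      simp [hf₀]
    · have hmx : max ε t = t := max_eq_right hεt
      have htpos : (0:ℝ) < t := lt_of_lt_of_le hε0 hεt
      rw [hf₀]
      simp only []
      rw [hmx, div_self htpos.ne', abs_one]
  have hpJ : p ∈ J := by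
    have hinvc : ContinuousOn (fun t : ℝ => (max ε t)⁻¹) (spectrum ℝ h) :=
      (Continuous.continuousOn (by
        exact (continuous_const.max continuous_id).inv₀ fun t => (hmaxpos t).ne'))
    have e : p = cfc (fun t : ℝ => (max ε t)⁻¹) h * h := by
      rw [hp]
      have e1 : cfc f₀ h = cfc (fun t : ℝ => (max ε t)⁻¹ * t) h :=
        cfc_congr fun t _ => by rw [hf₀]; simp only []; rw [div_eq_inv_mul]
      rw [e1, cfc_mul _ _ h hinvc (continuousOn_id' _), cfc_id' ℝ h]
    rw [e]
    exact J.smul_mem _ hhJ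
  have hhp : h * p = h :=
    calc h * p = cfc (fun t : ℝ => t) h * cfc f₀ h := by rw [cfc_id' ℝ h, hp]
      _ = cfc (fun t : ℝ => t * f₀ t) h :=
          (cfc_mul (fun t : ℝ => t) f₀ h (continuousOn_id' _) hf₀c.continuousOn).symm
      _ = cfc (fun t : ℝ => t) h := cfc_congr fun t ht => (hdich t ht).2
      _ = h := cfc_id' ℝ h
  set K : Submodule A A :=
    { carrier := {a : A | a * p = a}
      add_mem' := by
        intro a b ha hb
        simp only [Set.mem_setOf_eq] at *
        rw [add_mul, ha, hb]
      zero_mem' := zero_mul p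
      smul_mem' := by
        intro c a ha
        simp only [Set.mem_setOf_eq, smul_eq_mul] at *
        rw [mul_assoc, ha] } with hK
  have hKclosed : IsClosed (K : Set A) :=
    isClosed_eq (continuous_id.mul continuous_const) continuous_id
  have hxiK : ∀ i, x i ∈ K := by
    intro i
    have hsub : closure ((span A {h} : Submodule A A) : Set A) ⊆ (K : Set A) := by
      apply closure_minimal _ hKclosed
      intro a ha
      obtain ⟨b, hb⟩ := mem_span_singleton.mp ha
      rw [smul_eq_mul] at hb
      show a * p = a
      rw [← hb, mul_assoc, hhp]
    exact hsub (key1 i)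
  refine ⟨p, hidem, hpnorm, le_antisymm ?_ ?_⟩
  · rw [← hspan, span_le]
    rintro _ ⟨i, rfl⟩
    exact mem_span_singleton.mpr ⟨x i, by rw [smul_eq_mul]; exact hxiK i⟩
  · rw [span_le, Set.singleton_subset_iff]
    exact hpJ

section Machinery

variable {A : Type*} [CStarAlgebra A]

private lemma fg_of_le_noeth (L I : Submodule A A) (hFG : L.FG) [hN : IsNoetherian A (A ⧸ L)]
    (hLI : L ≤ I) : I.FG := by
  apply Submodule.fg_of_fg_map_of_fg_inf_ker L.mkQ
  · exact IsNoetherian.noetherian _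
  · rwa [Submodule.ker_mkQ, inf_eq_right.mpr hLI]

private lemma part_one (L : Submodule A A) (hFG : L.FG) [hN : IsNoetherian A (A ⧸ L)]
    (I : Submodule A A) (hLI : L ≤ I) :
    ∃ p : A, IsIdempotentElem p ∧ I = span A {p} := by
  have hclfg : I.topologicalClosure.FG :=
    fg_of_le_noeth L _ hFG (hLI.trans (Submodule.le_topologicalClosure I))
  obtain ⟨p, hidem, hnorm, hcl⟩ :=
    cstar_fg_closed I.topologicalClosure hclfg (Submodule.isClosed_topologicalClosure I)
  have hpcl : p ∈ closure (I : Set A) := by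
    have h1 : p ∈ I.topologicalClosure := hcl ▸ mem_span_singleton_self p
    rwa [← Submodule.topologicalClosure_coe]
  obtain ⟨b, hbI, hdist⟩ := Metric.mem_closure_iff.mp hpcl 1 one_pos
  have hIle : I ≤ span A {p} := hcl ▸ Submodule.le_topologicalClosure I
  have hbp : ‖b - p‖ < 1 := by
    rw [norm_sub_rev, ← dist_eq_norm]
    exact hdist
  exact ⟨p, hidem, span_eq_of_close I p b hidem hnorm hIle hbI hbp⟩

private lemma le_socle_of_semisimple {A : Type*} [Ring A] (N : Submodule A A)
    (hss : IsSemisimpleModule A N) : N ≤ socle A := by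
  have htop := IsSemisimpleModule.sSup_simples_eq_top A N
  have hN : N = Submodule.map N.subtype ⊤ := by
    rw [Submodule.map_top, Submodule.range_subtype]
  rw [socle, hN, ← htop, sSup_eq_iSup', Submodule.map_iSup]
  apply iSup_le
  rintro ⟨m, hm⟩
  have hsimple : IsSimpleModule A ↥(Submodule.map N.subtype m) := by
    haveI : IsSimpleModule A ↥m := hm
    exact IsSimpleModule.congr
      (Submodule.equivMapOfInjective N.subtype N.injective_subtype m).symm
  exact le_sSup (isSimpleModule_iff_isAtom.mp hsimple)

end Machinery

theorem stmt17 (A : Type*) [CStarAlgebra A] (L : Submodule A A) (hFG : L.FG)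
    (hN : IsNoetherian A (A ⧸ L)) :
    (∀ I : Submodule A A, L ≤ I → ∃ p : A, IsIdempotentElem p ∧ I = Submodule.span A {p}) ∧
    (∃ p : A, IsIdempotentElem p ∧ p ∈ socle A ∧ L = Submodule.span A {1 - p}) ∧
    IsFredholmLeftIdeal L ∧ IsSemisimpleModule A (A ⧸ L) := by
  have part1 : ∀ I : Submodule A A, L ≤ I → ∃ p : A, IsIdempotentElem p ∧ I = span A {p} :=
    fun I hLI => part_one L hFG I hLI
  obtain ⟨q, hq, hLq⟩ := part1 L le_rfl
  have hqL : q ∈ L := hLq ▸ mem_span_singleton_self q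
  -- the quotient is semisimple
  have hsemi : IsSemisimpleModule A (A ⧸ L) := by
    refine { exists_isCompl := ?_ }
    intro S
    set I := Submodule.comap L.mkQ S with hI
    have hLI : L ≤ I := by
      intro a ha
      rw [hI, mem_comap, show L.mkQ a = 0 from (Submodule.Quotient.mk_eq_zero L).mpr ha]
      exact S.zero_mem
    obtain ⟨e, he, hIe⟩ := part1 I hLI
    refine ⟨Submodule.map L.mkQ (span A {1 - e}), ?_, ?_⟩
    · rw [disjoint_iff, eq_bot_iff]
      rintro z hz
      rw [mem_inf] at hz
      obtain ⟨hzS, hzT⟩ := hz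
      obtain ⟨w, hw, rfl⟩ := hzT
      have hwI : w ∈ I := by rw [hI, mem_comap]; exact hzS
      have hwe : w * e = w := by
        obtain ⟨b, hb⟩ := mem_span_singleton.mp (hIe ▸ hwI)
        rw [smul_eq_mul] at hb
        rw [← hb, mul_assoc, he]
      have hwe0 : w * e = 0 := by
        obtain ⟨c, hc⟩ := mem_span_singleton.mp hw
        rw [smul_eq_mul] at hc
        rw [← hc, mul_assoc, sub_mul, one_mul, he, sub_self, mul_zero]
      have hw0 : w = 0 := by rw [← hwe, hwe0]
      rw [hw0]
      simp
    · rw [codisjoint_iff, eq_top_iff]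
      rintro z -
      obtain ⟨w, rfl⟩ := Submodule.mkQ_surjective L z
      rw [mem_sup]
      refine ⟨L.mkQ (w * e), ?_, L.mkQ (w * (1 - e)), ?_, ?_⟩
      · have hweI : w * e ∈ I := by
          rw [hIe]
          exact mem_span_singleton.mpr ⟨w, rfl⟩
        rw [hI, mem_comap] at hweI
        exact hweI
      · exact ⟨w * (1 - e), mem_span_singleton.mpr ⟨w, rfl⟩, rfl⟩
      · rw [← map_add, ← mul_add, add_sub_cancel, mul_one]
  -- p := 1 - q is an idempotent in the socle
  have hpidem : IsIdempotentElem (1 - q) := hq.one_sub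
  have hker : L ≤ LinearMap.ker (LinearMap.toSpanSingleton A A (1 - q)) := by
    intro a ha
    rw [LinearMap.mem_ker, LinearMap.toSpanSingleton_apply, smul_eq_mul]
    obtain ⟨b, hb⟩ := mem_span_singleton.mp (hLq ▸ ha)
    rw [smul_eq_mul] at hb
    rw [← hb, mul_assoc, mul_sub, mul_one, hq, sub_self, mul_zero]
  set ψ : (A ⧸ L) →ₗ[A] A := L.liftQ (LinearMap.toSpanSingleton A A (1 - q)) hker with hψ
  have hrange : LinearMap.range ψ = span A {1 - q} := by
    rw [hψ, Submodule.range_liftQ, ← LinearMap.span_singleton_eq_range]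
  have hss : IsSemisimpleModule A ↥(span A ({1 - q} : Set A)) := by
    haveI := hsemi
    have hr := IsSemisimpleModule.range ψ
    rwa [hrange] at hr
  have hsocle : (1 - q) ∈ socle A :=
    le_socle_of_semisimple _ hss (mem_span_singleton_self (1 - q))
  have hLspan : L = span A {1 - (1 - q)} := by rw [sub_sub_cancel]; exact hLq
  have hneg : q * q - 1 ∈ socle A := by
    rw [hq]
    have e : q - 1 = -(1 - q) := (neg_sub 1 q).symm
    rw [e]
    exact (socle A).neg_mem hsocle
  exact ⟨fun I hLI => part1 I hLI, ⟨1 - q, hpidem, hsocle, hLspan⟩,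
    ⟨q, hqL, q, hneg, hneg⟩, hsemi⟩
end
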